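/- arXiv:2105.06248 — 4 statements merged into one kernel-verified Lean document; each statement's English description precedes it below -/
import Mathlib

section
/- Let L₁,…,L₆ be six pairwise distinct lines in P² (zero sets of pairwise non-proportional nonzero linear forms) such that no three of the lines pass through a common point, and such that any line distinct from L₁,…,L₆ contains at most 3 of the pairwise intersection points of the six lines. Let S be the set of the 15 pairwise intersection points Lᵢ ∩ Lⱼ (1 ≤ i < j ≤ 6). Then S cannot be contained in the union of a cubic curve and two points: for every nonzero homogeneous cubic polynomial F and all points p, q ∈ P², the set S is not contained in {x ∈ P² : F(x) = 0} ∪ {p, q}. -/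
open MvPolynomial
set_option maxRecDepth 4000

lemma deg_one_single (d : Fin 3 →₀ ℕ) (hd : d 0 + d 1 + d 2 = 1) :
    ∃ i, d = Finsupp.single i 1 := by
  have h : (d 0 = 1 ∧ d 1 = 0 ∧ d 2 = 0) ∨ (d 0 = 0 ∧ d 1 = 1 ∧ d 2 = 0) ∨
      (d 0 = 0 ∧ d 1 = 0 ∧ d 2 = 1) := by omega
  rcases h with ⟨h0, h1, h2⟩ | ⟨h0, h1, h2⟩ | ⟨h0, h1, h2⟩
  · exact ⟨0, Finsupp.ext fun j => by fin_cases j <;> simp [Finsupp.single_apply, h0, h1, h2]⟩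
  · exact ⟨1, Finsupp.ext fun j => by fin_cases j <;> simp [Finsupp.single_apply, h0, h1, h2]⟩
  · exact ⟨2, Finsupp.ext fun j => by fin_cases j <;> simp [Finsupp.single_apply, h0, h1, h2]⟩

lemma homog_one_sum (d : Fin 3 →₀ ℕ) {m : MvPolynomial (Fin 3) ℂ}
    (hm : m.IsHomogeneous 1) (hc : coeff d m ≠ 0) : d 0 + d 1 + d 2 = 1 := by
  have := hm hc
  rw [Finsupp.weight_apply] at this
  rw [Finsupp.sum_fintype] at this
  · rw [Fin.sum_univ_three] at this
    simpa using this
  · intro i; simp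

lemma homog_one_rep {m : MvPolynomial (Fin 3) ℂ} (hm : m.IsHomogeneous 1) :
    m = ∑ i : Fin 3, C (coeff (Finsupp.single i 1) m) * X i := by
  apply MvPolynomial.ext; intro d
  rw [MvPolynomial.coeff_sum]
  simp only [coeff_C_mul, coeff_X']
  by_cases h : ∃ i, d = Finsupp.single i 1
  · obtain ⟨i, rfl⟩ := h
    rw [Finset.sum_eq_single i]
    · simp
    · intro j _ hj
      have : ¬ (Finsupp.single j 1 = Finsupp.single i 1) := by
        intro he
        exact hj (by simpa using (Finsupp.single_left_injective one_ne_zero) he)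
      simp [this]
    · simp
  · have hd0 : coeff d m = 0 := by
      by_contra hc
      exact h (deg_one_single d (homog_one_sum d hm hc))
    rw [hd0]
    symm; apply Finset.sum_eq_zero
    intro i _
    have : ¬ (Finsupp.single i 1 = d) := fun he => h ⟨i, he.symm⟩
    simp [this]

noncomputable def evalL (m : MvPolynomial (Fin 3) ℂ) : (Fin 3 → ℂ) →ₗ[ℂ] ℂ :=
  ∑ i : Fin 3, coeff (Finsupp.single i 1) m • (LinearMap.proj i : (Fin 3 → ℂ) →ₗ[ℂ] ℂ)

lemma evalL_apply {m : MvPolynomial (Fin 3) ℂ} (hm : m.IsHomogeneous 1) (v : Fin 3 → ℂ) :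
    evalL m v = eval v m := by
  conv_rhs => rw [homog_one_rep hm]
  simp [evalL, LinearMap.sum_apply]

lemma evalL_zero_of {m : MvPolynomial (Fin 3) ℂ} (hm : m.IsHomogeneous 1)
    (h : evalL m = 0) : m = 0 := by
  rw [homog_one_rep hm]
  apply Finset.sum_eq_zero
  intro i _
  have : coeff (Finsupp.single i 1) m = 0 := by
    have := congrArg (fun f : (Fin 3 → ℂ) →ₗ[ℂ] ℂ => f (Pi.single i 1)) h
    simpa [evalL, LinearMap.sum_apply, Pi.single_apply, Finset.sum_ite_eq'] using this
  simp [this]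

lemma eval_smul_homog {F : MvPolynomial (Fin 3) ℂ} {n : ℕ} (hF : F.IsHomogeneous n)
    (c : ℂ) (v : Fin 3 → ℂ) : eval (c • v) F = c ^ n * eval v F := by
  rw [eval_eq' (c • v) F, eval_eq' v F, Finset.mul_sum]
  apply Finset.sum_congr rfl
  intro d hd
  have hdeg : ∑ i : Fin 3, d i = n := by
    have := hF (mem_support_iff.mp hd)
    rw [Finsupp.weight_apply, Finsupp.sum_fintype] at this
    · simpa using this
    · intro i; simp
  have : ∏ i : Fin 3, (c • v) i ^ d i = c ^ n * ∏ i : Fin 3, v i ^ d i := by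
    simp only [Pi.smul_apply, smul_eq_mul, mul_pow]
    rw [Finset.prod_mul_distrib, Finset.prod_pow_eq_pow_sum, hdeg]
  rw [this]; ring

lemma lineRestrict (F : MvPolynomial (Fin 3) ℂ) (hF : F.totalDegree ≤ 3)
    (u w : Fin 3 → ℂ) :
    ∃ h : Polynomial ℂ, h.natDegree ≤ 3 ∧ ∀ z : ℂ, h.eval z = eval (u + z • w) F := by
  set g : Fin 3 → Polynomial ℂ := fun i => Polynomial.C (u i) + Polynomial.C (w i) * Polynomial.X
  refine ⟨MvPolynomial.aeval g F, ?_, ?_⟩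
  · -- degree bound
    conv_lhs => rw [F.as_sum]
    rw [map_sum]
    apply Polynomial.natDegree_sum_le_of_forall_le
    intro d hd
    rw [MvPolynomial.aeval_monomial]
    apply le_trans (Polynomial.natDegree_mul_le)
    have h1 : (algebraMap ℂ (Polynomial ℂ) (coeff d F)).natDegree = 0 := by
      simp [Polynomial.natDegree_C]
    rw [h1, zero_add]
    apply le_trans (Polynomial.natDegree_prod_le _ _)
    calc ∑ i ∈ d.support, (g i ^ d i).natDegree
        ≤ ∑ i ∈ d.support, d i := by
          apply Finset.sum_le_sum
          intro i _
          apply le_trans (Polynomial.natDegree_pow_le)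
          have : (g i).natDegree ≤ 1 := by
            apply le_trans (Polynomial.natDegree_add_le _ _)
            simp [Polynomial.natDegree_C_mul_le, g]
            exact le_trans (Polynomial.natDegree_mul_le) (by simp)
          calc d i * (g i).natDegree ≤ d i * 1 := Nat.mul_le_mul_left _ this
            _ = d i := Nat.mul_one _
      _ ≤ F.totalDegree := MvPolynomial.le_totalDegree hd
      _ ≤ 3 := hF
  · intro z
    have : Polynomial.eval z (MvPolynomial.aeval g F) =
        (Polynomial.aeval z : Polynomial ℂ →ₐ[ℂ] ℂ) (MvPolynomial.aeval g F) := by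
      rw [Polynomial.coe_aeval_eq_eval]
    rw [this, ← AlgHom.comp_apply, MvPolynomial.comp_aeval]
    rw [show (MvPolynomial.aeval fun i => (Polynomial.aeval z) (g i)) F
        = eval (fun i => (Polynomial.aeval z) (g i)) F from by
      rw [MvPolynomial.aeval_def, MvPolynomial.eval, eval₂Hom_congr rfl rfl rfl]
      rfl]
    have hfun : (fun i => (Polynomial.aeval z) (g i)) = u + z • w := by
      funext i
      show Polynomial.aeval z (Polynomial.C (u i) + Polynomial.C (w i) * Polynomial.X) = _
      rw [map_add, map_mul, Polynomial.aeval_C, Polynomial.aeval_C, Polynomial.aeval_X]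
      simp only [Algebra.algebraMap_self, RingHom.id_apply, Pi.add_apply, Pi.smul_apply,
        smul_eq_mul]
      ring
    rw [hfun]

lemma poly_zero_of_four_roots {h : Polynomial ℂ} (hd : h.natDegree ≤ 3)
    (z : Fin 4 → ℂ) (hz : Function.Injective z) (hroot : ∀ k, h.eval (z k) = 0) :
    h = 0 := by
  by_contra h0
  have hmem : ∀ k, z k ∈ h.roots.toFinset := by
    intro k
    rw [Multiset.mem_toFinset, Polynomial.mem_roots h0]
    exact hroot k
  have hcard : (Finset.univ.image z).card ≤ h.roots.toFinset.card := by
    apply Finset.card_le_card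
    intro x hx
    obtain ⟨k, _, rfl⟩ := Finset.mem_image.mp hx
    exact hmem k
  rw [Finset.card_image_of_injective _ hz, Finset.card_univ, Fintype.card_fin] at hcard
  have := le_trans (Multiset.toFinset_card_le _) (Polynomial.card_roots' h)
  omega

lemma exists_eval_ne {G : MvPolynomial (Fin 3) ℂ} (hG : G ≠ 0) :
    ∃ w : Fin 3 → ℂ, eval w G ≠ 0 := by
  by_contra h
  push_neg at h
  exact hG (MvPolynomial.funext (q := 0) (fun x => by simp [h x]))

lemma finrank_ker_functional {f : (Fin 3 → ℂ) →ₗ[ℂ] ℂ} (hf : f ≠ 0) :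
    Module.finrank ℂ (LinearMap.ker f) = 2 := by
  have h := LinearMap.finrank_range_add_finrank_ker f
  have hsurj : Function.Surjective f := by
    obtain ⟨x, hx⟩ : ∃ x, f x ≠ 0 := by
      by_contra hc; push_neg at hc
      exact hf (LinearMap.ext fun x => by simp [hc x])
    intro c
    exact ⟨(c / f x) • x, by simp [map_smul, div_mul_cancel₀ _ hx]⟩
  rw [LinearMap.range_eq_top.2 hsurj] at h
  rw [finrank_top, Module.finrank_self, Module.finrank_fin_fun] at h
  omega

lemma exists_common_zero (f g : (Fin 3 → ℂ) →ₗ[ℂ] ℂ) :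
    ∃ v : Fin 3 → ℂ, v ≠ 0 ∧ f v = 0 ∧ g v = 0 := by
  have hni : ¬ Function.Injective (f.prod g) := by
    intro hinj
    have h1 := LinearMap.finrank_le_finrank_of_injective hinj
    rw [Module.finrank_fin_fun] at h1
    have h2 : Module.finrank ℂ (ℂ × ℂ) = 2 := by
      rw [Module.finrank_prod, Module.finrank_self]
    omega
  rw [← LinearMap.ker_eq_bot] at hni
  obtain ⟨v, hv, hv0⟩ := (Submodule.ne_bot_iff _).mp hni
  refine ⟨v, hv0, ?_, ?_⟩
  · exact congrArg Prod.fst hv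
  · exact congrArg Prod.snd hv

lemma span_pair_eq_ker {f : (Fin 3 → ℂ) →ₗ[ℂ] ℂ} (hf : f ≠ 0)
    {v v' : Fin 3 → ℂ} (hv : v ≠ 0)
    (hind : LinearIndependent ℂ ![v, v'])
    (h1 : f v = 0) (h1' : f v' = 0) :
    Submodule.span ℂ {v, v'} = LinearMap.ker f := by
  have hle : Submodule.span ℂ {v, v'} ≤ LinearMap.ker f := by
    rw [Submodule.span_le]
    intro x hx
    rcases hx with rfl | hx
    · exact h1
    · rw [Set.mem_singleton_iff] at hx; subst hx; exact h1'
  apply Submodule.eq_of_le_of_finrank_le hle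
  rw [finrank_ker_functional hf]
  have : Module.finrank ℂ (Submodule.span ℂ (Set.range ![v, v'])) = 2 := by
    rw [finrank_span_eq_card hind]
    simp
  rw [show (Set.range ![v, v'] : Set (Fin 3 → ℂ)) = {v, v'} by
    simp [Matrix.range_cons, Matrix.range_empty]
    exact Set.pair_comm v' v] at this
  omega

lemma ker_prop {f g : (Fin 3 → ℂ) →ₗ[ℂ] ℂ}
    (hprop : ∀ a b : ℂ, a • f + b • g = 0 → a = 0 ∧ b = 0)
    {v v' : Fin 3 → ℂ} (hv : v ≠ 0) (hv' : v' ≠ 0)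
    (h1 : f v = 0) (h2 : g v = 0) (h1' : f v' = 0) (h2' : g v' = 0) :
    ∃ c : ℂ, v' = c • v := by
  by_contra hc
  push_neg at hc
  have hind : LinearIndependent ℂ ![v, v'] :=
    (LinearIndependent.pair_iff' hv).mpr (fun a => fun he => hc a he.symm)
  have hf0 : f ≠ 0 := by
    intro h; exact one_ne_zero ((hprop 1 0 (by simp [h])).1)
  have hg0 : g ≠ 0 := by
    intro h; exact one_ne_zero ((hprop 0 1 (by simp [h])).2)
  have hkf := span_pair_eq_ker hf0 hv hind h1 h1'
  have hkg := span_pair_eq_ker hg0 hv hind h2 h2'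
  have hker : LinearMap.ker f = LinearMap.ker g := hkf ▸ hkg
  obtain ⟨z, hz⟩ : ∃ z, f z ≠ 0 := by
    by_contra h; push_neg at h
    exact hf0 (LinearMap.ext fun x => by simp [h x])
  have hz0 : z ≠ 0 := fun h => hz (by simp [h])
  have hzK : z ∉ LinearMap.ker f := fun h => hz h
  -- the functional (g z) • f - (f z) • g vanishes everywhere
  set h : (Fin 3 → ℂ) →ₗ[ℂ] ℂ := (g z) • f + (-(f z)) • g with hdef
  have hsup : LinearMap.ker f ⊔ Submodule.span ℂ {z} = ⊤ := by
    apply Submodule.eq_top_of_finrank_eq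
    have hinf : LinearMap.ker f ⊓ Submodule.span ℂ {z} = ⊥ := by
      rw [Submodule.eq_bot_iff]
      rintro x ⟨hx1, hx2⟩
      obtain ⟨c, rfl⟩ := Submodule.mem_span_singleton.mp hx2
      rcases eq_or_ne c 0 with rfl | hc0
      · simp
      · exfalso
        apply hzK
        have : f (c • z) = 0 := hx1
        rw [map_smul, smul_eq_mul] at this
        exact LinearMap.mem_ker.mpr ((mul_eq_zero.mp this).resolve_left hc0)
    have := Submodule.finrank_sup_add_finrank_inf_eq (LinearMap.ker f) (Submodule.span ℂ {z})
    rw [hinf, finrank_ker_functional hf0, finrank_span_singleton hz0] at this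
    simp only [finrank_bot] at this
    rw [Module.finrank_fin_fun]
    omega
  have hzero : h = 0 := by
    apply LinearMap.ext
    intro x
    have hx : x ∈ LinearMap.ker f ⊔ Submodule.span ℂ {z} := hsup ▸ Submodule.mem_top
    obtain ⟨k, hk, y, hy, rfl⟩ := Submodule.mem_sup.mp hx
    obtain ⟨c, rfl⟩ := Submodule.mem_span_singleton.mp hy
    have hfk : f k = 0 := hk
    have hgk : g k = 0 := (hker ▸ hk : k ∈ LinearMap.ker g)
    simp [hdef, hfk, hgk, map_smul]
    ring
  have := (hprop _ _ hzero).2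
  simp at this
  exact hz this

lemma plane_vanish {F : MvPolynomial (Fin 3) ℂ} (hFh : F.IsHomogeneous 3)
    {f : (Fin 3 → ℂ) →ₗ[ℂ] ℂ} (hf : f ≠ 0)
    (x : Fin 4 → (Fin 3 → ℂ))
    (hxm : ∀ k, f (x k) = 0)
    (hxF : ∀ k, eval (x k) F = 0)
    (hpr : ∀ k l, k ≠ l → ∀ c : ℂ, x k ≠ c • x l)
    (v : Fin 3 → ℂ) (hv : f v = 0) : eval v F = 0 := by
  have hx0 : ∀ k, x k ≠ 0 := by
    intro k
    rcases eq_or_ne k 0 with rfl | hk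
    · intro h; exact hpr 0 1 (by decide) 0 (by simp [h])
    · intro h; exact hpr k 0 hk 0 (by simp [h])
  have hind : LinearIndependent ℂ ![x 0, x 1] :=
    (LinearIndependent.pair_iff' (hx0 0)).mpr
      (fun a he => hpr 1 0 (by decide) a he.symm)
  have hspan := span_pair_eq_ker hf (hx0 0) hind (hxm 0) (hxm 1)
  have hmem : ∀ k, ∃ s t : ℂ, s • x 0 + t • x 1 = x k := by
    intro k
    apply Submodule.mem_span_pair.mp
    rw [hspan]
    exact hxm k
  choose s t hst using hmem
  obtain ⟨sv, tv, hsv⟩ : ∃ s t : ℂ, s • x 0 + t • x 1 = v := by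
    apply Submodule.mem_span_pair.mp
    rw [hspan]; exact hv
  have hpair : ∀ k, ¬(s k = 0 ∧ t k = 0) := by
    rintro k ⟨h1, h2⟩
    apply hx0 k
    rw [← hst k, h1, h2]; simp
  have hdet : ∀ k l, k ≠ l → s k * t l ≠ s l * t k := by
    intro k l hkl he
    rcases eq_or_ne (s l) 0 with hsl | hsl
    · have htl : t l ≠ 0 := fun h => hpair l ⟨hsl, h⟩
      have hsk : s k = 0 := by
        have : s k * t l = 0 := by rw [he, hsl, zero_mul]
        exact (mul_eq_zero.mp this).resolve_right htl
      apply hpr k l hkl (t k / t l)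
      rw [← hst k, ← hst l, hsk, hsl]
      simp [smul_smul, div_mul_cancel₀ _ htl]
    · apply hpr k l hkl (s k / s l)
      rw [← hst k, ← hst l]
      rw [smul_add, smul_smul, smul_smul, div_mul_cancel₀ _ hsl]
      have h2 : s k / s l * t l = t k := by
        field_simp
        linear_combination he
      rw [h2]
  -- choose the chart parameter c
  obtain ⟨c, hc⟩ := Infinite.exists_notMem_finset (Finset.univ.image (fun k => t k / s k))
  have ha : ∀ k, t k - c * s k ≠ 0 := by
    intro k h
    rcases eq_or_ne (s k) 0 with hsk | hsk
    · exact hpair k ⟨hsk, by rwa [hsk, mul_zero, sub_zero] at h⟩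
    · apply hc
      rw [Finset.mem_image]
      refine ⟨k, Finset.mem_univ k, ?_⟩
      rw [div_eq_iff hsk]
      rw [sub_eq_zero] at h
      linear_combination h
  set u : Fin 3 → ℂ := x 1 with hu
  set w : Fin 3 → ℂ := x 0 + c • x 1 with hw
  have hxk : ∀ k, x k = (t k - c * s k) • u + s k • w := by
    intro k
    rw [hu, hw, ← hst k]
    module
  have hzroot : ∀ k, eval (u + (s k / (t k - c * s k)) • w) F = 0 := by
    intro k
    have hstep : u + (s k / (t k - c * s k)) • w = (t k - c * s k)⁻¹ • x k := by
      rw [hxk k]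
      conv_rhs => rw [smul_add, smul_smul, smul_smul, inv_mul_cancel₀ (ha k), one_smul]
      rw [div_eq_inv_mul]
    rw [hstep, eval_smul_homog hFh, hxF k, mul_zero]
  obtain ⟨h, hhd, hhe⟩ := lineRestrict F hFh.totalDegree_le u w
  have hh0 : h = 0 := by
    apply poly_zero_of_four_roots hhd (fun k => s k / (t k - c * s k))
    · intro k l hkl
      by_contra hne
      have H := (div_eq_div_iff (ha k) (ha l)).mp hkl
      exact hdet k l hne (by linear_combination H)
    · intro k
      rw [hhe]
      exact hzroot k
  have hall : ∀ z : ℂ, eval (u + z • w) F = 0 := by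
    intro z
    rw [← hhe z, hh0, Polynomial.eval_zero]
  have hwF : eval w F = 0 := by
    obtain ⟨h2, _, hh2e⟩ := lineRestrict F hFh.totalDegree_le w u
    have hh20 : h2 = 0 := by
      apply Polynomial.eq_zero_of_infinite_isRoot
      have hinf : ({0}ᶜ : Set ℂ).Infinite := Set.Finite.infinite_compl (Set.finite_singleton 0)
      apply hinf.mono
      intro z hz
      have hz0 : (z : ℂ) ≠ 0 := hz
      show Polynomial.IsRoot h2 z
      have hstep : w + z • u = z • (u + z⁻¹ • w) := by
        conv_rhs => rw [smul_add, smul_smul, mul_inv_cancel₀ hz0, one_smul]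
        module
      rw [Polynomial.IsRoot, hh2e z, hstep, eval_smul_homog hFh, hall, mul_zero]
    have h00 := hh2e 0
    rw [hh20, Polynomial.eval_zero] at h00
    have hw0 : w + (0 : ℂ) • u = w := by module
    rw [hw0] at h00
    exact h00.symm
  -- final: v = (tv - c*sv) • u + sv • w
  have hvrep : v = (tv - c * sv) • u + sv • w := by
    rw [hu, hw, ← hsv]
    module
  rcases eq_or_ne (tv - c * sv) 0 with hA | hA
  · rw [hvrep, hA, zero_smul, zero_add, eval_smul_homog hFh, hwF, mul_zero]
  · have hstep : v = (tv - c * sv) • (u + (sv / (tv - c * sv)) • w) := by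
      rw [hvrep]
      have hmul : (tv - c * sv) * (sv / (tv - c * sv)) = sv := by field_simp
      conv_rhs => rw [smul_add, smul_smul, hmul]
    rw [hstep, eval_smul_homog hFh, hall, mul_zero]

lemma cubic_zero_of_four_planes {F : MvPolynomial (Fin 3) ℂ} (hFh : F.IsHomogeneous 3)
    (m : Fin 4 → MvPolynomial (Fin 3) ℂ) (hm : ∀ k, (m k).IsHomogeneous 1)
    (hm0 : ∀ k, m k ≠ 0)
    (hpr : ∀ k l, k ≠ l → ∀ c : ℂ, m k ≠ c • m l)
    (hvan : ∀ k, ∀ v : Fin 3 → ℂ, eval v (m k) = 0 → eval v F = 0) :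
    F = 0 := by
  apply MvPolynomial.funext (q := 0)
  intro v
  rw [map_zero]
  by_cases hex : ∃ k, eval v (m k) = 0
  · obtain ⟨k, hk⟩ := hex; exact hvan k v hk
  push_neg at hex
  set Pairs := (Finset.univ : Finset (Fin 4 × Fin 4)).filter (fun pr => pr.1 ≠ pr.2) with hPairs
  set G : MvPolynomial (Fin 3) ℂ :=
    (∏ k : Fin 4, m k) *
      ∏ pr ∈ Pairs, (C (eval v (m pr.1)) * m pr.2 - C (eval v (m pr.2)) * m pr.1) with hG
  have hG0 : G ≠ 0 := by
    apply mul_ne_zero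
    · exact Finset.prod_ne_zero_iff.mpr (fun k _ => hm0 k)
    · apply Finset.prod_ne_zero_iff.mpr
      intro pr hpr'
      rw [hPairs, Finset.mem_filter] at hpr'
      intro hzero
      have ha : eval v (m pr.1) ≠ 0 := hex pr.1
      rw [sub_eq_zero] at hzero
      apply hpr pr.2 pr.1 (Ne.symm hpr'.2) (eval v (m pr.2) / eval v (m pr.1))
      have hC : (C (eval v (m pr.1)) : MvPolynomial (Fin 3) ℂ) ≠ 0 := by
        simpa using ha
      apply mul_left_cancel₀ hC
      rw [MvPolynomial.smul_eq_C_mul, ← mul_assoc, ← map_mul]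
      have hmul : eval v (m pr.1) * (eval v (m pr.2) / eval v (m pr.1)) = eval v (m pr.2) := by
        field_simp
      rw [hmul, hzero]
  obtain ⟨w, hw⟩ := exists_eval_ne hG0
  rw [hG, map_mul, map_prod, map_prod] at hw
  have hwk : ∀ k, eval w (m k) ≠ 0 := by
    intro k hk
    apply hw
    rw [mul_eq_zero]
    left
    exact Finset.prod_eq_zero (Finset.mem_univ k) hk
  have hwd : ∀ k l, k ≠ l →
      eval v (m k) * eval w (m l) - eval v (m l) * eval w (m k) ≠ 0 := by
    intro k l hkl hzero
    apply hw
    rw [mul_eq_zero]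
    right
    apply Finset.prod_eq_zero (i := (k, l))
    · rw [hPairs, Finset.mem_filter]
      exact ⟨Finset.mem_univ _, hkl⟩
    · show eval w (C (eval v (m k)) * m l - C (eval v (m l)) * m k) = 0
      rw [map_sub, map_mul, map_mul, eval_C, eval_C]
      exact hzero
  set z : Fin 4 → ℂ := fun k => -(eval v (m k)) / (eval w (m k)) with hz
  have hzinj : Function.Injective z := by
    intro k l hkl
    by_contra hne
    apply hwd k l hne
    rw [hz] at hkl
    simp only at hkl
    have := (div_eq_div_iff (hwk k) (hwk l)).mp hkl
    linear_combination -this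
  obtain ⟨h, hhd, hhe⟩ := lineRestrict F hFh.totalDegree_le v w
  have hh0 : h = 0 := by
    apply poly_zero_of_four_roots hhd z hzinj
    intro k
    rw [hhe]
    apply hvan k
    have hlin : eval (v + z k • w) (m k) = eval v (m k) + z k * eval w (m k) := by
      rw [← evalL_apply (hm k), ← evalL_apply (hm k) v, ← evalL_apply (hm k) w,
        map_add, map_smul, smul_eq_mul]
    rw [hlin, hz]
    simp only
    rw [div_mul_cancel₀ _ (hwk k)]
    ring
  have := hhe 0
  rw [hh0, Polynomial.eval_zero] at this
  have hv0 : v + (0 : ℂ) • w = v := by module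
  rw [hv0] at this
  exact this.symm

lemma evalL_linear (a b : ℂ) (m1 m2 : MvPolynomial (Fin 3) ℂ) :
    evalL (a • m1 + b • m2) = a • evalL m1 + b • evalL m2 := by
  unfold evalL
  rw [Finset.smul_sum, Finset.smul_sum, ← Finset.sum_add_distrib]
  apply Finset.sum_congr rfl
  intro i _
  rw [coeff_add, coeff_smul, coeff_smul]
  rw [add_smul, smul_smul, smul_smul]
  simp [smul_eq_mul]

theorem intersection_points_of_six_generic_lines_not_in_cubic_union_two_points
    (ℓ : Fin 6 → MvPolynomial (Fin 3) ℂ)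
    (hh : ∀ i, (ℓ i).IsHomogeneous 1) (hne : ∀ i, ℓ i ≠ 0)
    (hdist : ∀ i j : Fin 6, i ≠ j → ∀ c : ℂ, ℓ i ≠ c • ℓ j)
    (hnoconc : ∀ i j k : Fin 6, i ≠ j → j ≠ k → i ≠ k →
      ¬ ∃ p : Projectivization ℂ (Fin 3 → ℂ),
        eval p.rep (ℓ i) = 0 ∧ eval p.rep (ℓ j) = 0 ∧ eval p.rep (ℓ k) = 0)
    (S : Set (Projectivization ℂ (Fin 3 → ℂ)))
    (hS : S = {p | ∃ i j : Fin 6, i ≠ j ∧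
      eval p.rep (ℓ i) = 0 ∧ eval p.rep (ℓ j) = 0})
    (hline : ∀ m : MvPolynomial (Fin 3) ℂ, m ≠ 0 → m.IsHomogeneous 1 →
      (∀ i : Fin 6, ∀ c : ℂ, m ≠ c • ℓ i) →
      {p ∈ S | eval p.rep m = 0}.ncard ≤ 3)
    (F : MvPolynomial (Fin 3) ℂ) (hF : F ≠ 0) (hFh : F.IsHomogeneous 3)
    (p q : Projectivization ℂ (Fin 3 → ℂ)) :
    ¬ S ⊆ {y : Projectivization ℂ (Fin 3 → ℂ) | eval y.rep F = 0} ∪ {p, q} := by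
  classical
  intro hsub
  have hfe : ∀ i (v : Fin 3 → ℂ), evalL (ℓ i) v = eval v (ℓ i) :=
    fun i v => evalL_apply (hh i) v
  -- independence of functionals for distinct lines
  have keyzero : ∀ (a b : ℂ) (i j : Fin 6), i ≠ j → a • ℓ i + b • ℓ j = 0 → a = 0 := by
    intro a b i j hij h0
    by_contra ha
    apply hdist i j hij (a⁻¹ * (-b))
    have h1 : a • ℓ i = (-b) • ℓ j := by
      rw [neg_smul]
      exact eq_neg_of_add_eq_zero_left h0
    calc ℓ i = a⁻¹ • (a • ℓ i) := by rw [smul_smul, inv_mul_cancel₀ ha, one_smul]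
      _ = a⁻¹ • ((-b) • ℓ j) := by rw [h1]
      _ = (a⁻¹ * (-b)) • ℓ j := by rw [smul_smul]
  have hfind : ∀ i j : Fin 6, i ≠ j → ∀ a b : ℂ,
      a • evalL (ℓ i) + b • evalL (ℓ j) = 0 → a = 0 ∧ b = 0 := by
    intro i j hij a b hab
    have hhom : (a • ℓ i + b • ℓ j) ∈ homogeneousSubmodule (Fin 3) ℂ 1 :=
      Submodule.add_mem _
        (Submodule.smul_mem _ a ((mem_homogeneousSubmodule _ _).mpr (hh i)))
        (Submodule.smul_mem _ b ((mem_homogeneousSubmodule _ _).mpr (hh j)))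
    have hzero : a • ℓ i + b • ℓ j = 0 := by
      apply evalL_zero_of ((mem_homogeneousSubmodule _ _).mp hhom)
      rw [evalL_linear]
      exact hab
    refine ⟨keyzero a b i j hij hzero, keyzero b a j i hij.symm ?_⟩
    rw [add_comm]
    exact hzero
  -- existence of intersection points
  have hexist : ∀ i j : Fin 6, i ≠ j → ∃ x : Projectivization ℂ (Fin 3 → ℂ),
      eval x.rep (ℓ i) = 0 ∧ eval x.rep (ℓ j) = 0 := by
    intro i j _
    obtain ⟨v, hv0, h1, h2⟩ := exists_common_zero (evalL (ℓ i)) (evalL (ℓ j))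
    refine ⟨Projectivization.mk ℂ v hv0, ?_, ?_⟩
    · obtain ⟨a, ha⟩ := Projectivization.exists_smul_eq_mk_rep ℂ v hv0
      rw [← ha, Units.smul_def, ← hfe, map_smul, h1, smul_zero]
    · obtain ⟨a, ha⟩ := Projectivization.exists_smul_eq_mk_rep ℂ v hv0
      rw [← ha, Units.smul_def, ← hfe, map_smul, h2, smul_zero]
  choose! P hP1 hP2 using hexist
  -- uniqueness of intersection points
  have uniq : ∀ i j : Fin 6, i ≠ j → ∀ x : Projectivization ℂ (Fin 3 → ℂ),
      eval x.rep (ℓ i) = 0 → eval x.rep (ℓ j) = 0 → x = P i j := by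
    intro i j hij x hx1 hx2
    obtain ⟨c, hc⟩ := ker_prop (hfind i j hij) x.rep_nonzero (P i j).rep_nonzero
      (by rw [hfe]; exact hx1) (by rw [hfe]; exact hx2)
      (by rw [hfe]; exact hP1 i j hij) (by rw [hfe]; exact hP2 i j hij)
    have hiff := Projectivization.mk_eq_mk_iff' ℂ (P i j).rep x.rep
      (P i j).rep_nonzero x.rep_nonzero
    rw [Projectivization.mk_rep, Projectivization.mk_rep] at hiff
    exact (hiff.mpr ⟨c, hc.symm⟩).symm
  have hPmem : ∀ i j : Fin 6, i ≠ j → P i j ∈ S := by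
    intro i j hij
    rw [hS]
    exact ⟨i, j, hij, hP1 i j hij, hP2 i j hij⟩
  have hsymm : ∀ i j : Fin 6, i ≠ j → P j i = P i j := by
    intro i j hij
    exact uniq i j hij (P j i) (hP2 j i hij.symm) (hP1 j i hij.symm)
  have hinj : ∀ i j k l : Fin 6, i ≠ j → k ≠ l → P i j = P k l →
      (k = i ∨ k = j) ∧ (l = i ∨ l = j) := by
    intro i j k l hij hkl he
    constructor
    · by_contra hk
      push_neg at hk
      apply hnoconc i j k hij (Ne.symm hk.2) (Ne.symm hk.1)
      exact ⟨P i j, hP1 i j hij, hP2 i j hij, by rw [he]; exact hP1 k l hkl⟩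
    · by_contra hl
      push_neg at hl
      apply hnoconc i j l hij (Ne.symm hl.2) (Ne.symm hl.1)
      exact ⟨P i j, hP1 i j hij, hP2 i j hij, by rw [he]; exact hP2 k l hkl⟩
  have hinj2 : ∀ i j k l : Fin 6, i < j → k < l → P i j = P k l → i = k ∧ j = l := by
    intro i j k l hij hkl he
    obtain ⟨hk, hl⟩ := hinj i j k l (ne_of_lt hij) (ne_of_lt hkl) he
    rcases hk with rfl | rfl <;> rcases hl with rfl | rfl
    · exact absurd hkl (lt_irrefl _)
    · exact ⟨rfl, rfl⟩
    · exact absurd (hij.trans hkl) (lt_irrefl _)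
    · exact absurd hkl (lt_irrefl _)
  -- counting
  set Pairs : Finset (Fin 6 × Fin 6) := Finset.univ.filter (fun x => x.1 < x.2) with hPairsdef
  have hPairscard : Pairs.card = 15 := by decide
  set bad := Pairs.filter (fun x => P x.1 x.2 = p ∨ P x.1 x.2 = q) with hbaddef
  have hbadcard : bad.card ≤ 2 := by
    have h1 : bad.card ≤ ({p, q} : Finset (Projectivization ℂ (Fin 3 → ℂ))).card := by
      apply Finset.card_le_card_of_injOn (fun x => P x.1 x.2)
      · intro x hx
        have hx' := Finset.mem_coe.mp hx
        rw [hbaddef, Finset.mem_filter] at hx'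
        rcases hx'.2 with h | h <;> simp [h]
      · intro x hx y hy hxy
        have hx' := Finset.mem_coe.mp hx
        have hy' := Finset.mem_coe.mp hy
        rw [hbaddef, Finset.mem_filter] at hx' hy'
        have hxP := hx'.1
        have hyP := hy'.1
        rw [hPairsdef, Finset.mem_filter] at hxP hyP
        have := hinj2 x.1 x.2 y.1 y.2 hxP.2 hyP.2 hxy
        exact Prod.ext this.1 this.2
    have h2 : ({p, q} : Finset (Projectivization ℂ (Fin 3 → ℂ))).card ≤ 2 :=
      le_trans (Finset.card_insert_le _ _) (by simp)
    exact le_trans h1 h2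
  set good := Pairs \ bad with hgooddef
  have hgoodlt : ∀ x ∈ good, x.1 < x.2 := by
    intro x hx
    rw [hgooddef, Finset.mem_sdiff, hPairsdef, Finset.mem_filter] at hx
    exact hx.1.2
  have hbsub : bad ⊆ Pairs := by
    rw [hbaddef]; exact Finset.filter_subset _ _
  have hgoodcard : 13 ≤ good.card := by
    rw [hgooddef, Finset.card_sdiff_of_subset hbsub]
    omega
  have hgoodF : ∀ x ∈ good, eval (P x.1 x.2).rep F = 0 := by
    intro x hx
    have hlt := hgoodlt x hx
    rw [hgooddef, Finset.mem_sdiff] at hx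
    obtain ⟨hxp, hxb⟩ := hx
    rcases hsub (hPmem x.1 x.2 (ne_of_lt hlt)) with h | h
    · exact h
    · exfalso
      apply hxb
      rw [hbaddef, Finset.mem_filter]
      refine ⟨hxp, ?_⟩
      rcases h with h | h
      · left; exact h
      · right; exact h
  set Q := Finset.univ.filter
    (fun x : Fin 6 × Fin 6 => x.1 ≠ x.2 ∧ eval (P x.1 x.2).rep F = 0) with hQdef
  have hQcard : 26 ≤ Q.card := by
    have hsubQ : good ∪ good.image Prod.swap ⊆ Q := by
      intro x hx
      rw [Finset.mem_union] at hx
      rcases hx with hx | hx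
      · rw [hQdef, Finset.mem_filter]
        exact ⟨Finset.mem_univ _, ne_of_lt (hgoodlt x hx), hgoodF x hx⟩
      · obtain ⟨y, hy, rfl⟩ := Finset.mem_image.mp hx
        have hlt := hgoodlt y hy
        rw [hQdef, Finset.mem_filter]
        refine ⟨Finset.mem_univ _, ne_of_gt hlt, ?_⟩
        show eval (P y.2 y.1).rep F = 0
        rw [hsymm y.1 y.2 (ne_of_lt hlt)]
        exact hgoodF y hy
    have hdisj : Disjoint good (good.image Prod.swap) := by
      rw [Finset.disjoint_left]
      intro x hx hx'
      obtain ⟨y, hy, he⟩ := Finset.mem_image.mp hx'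
      have h1 := hgoodlt x hx
      have h2 := hgoodlt y hy
      rw [← he] at h1
      exact lt_asymm h2 h1
    have hcu := Finset.card_union_of_disjoint hdisj
    have himg : (good.image Prod.swap).card = good.card :=
      Finset.card_image_of_injective _ Prod.swap_injective
    have hle := Finset.card_le_card hsubQ
    omega
  set cnt : Fin 6 → ℕ :=
    fun i => (Finset.univ.filter (fun j => i ≠ j ∧ eval (P i j).rep F = 0)).card with hcntdef
  have hQsum : Q.card = ∑ i : Fin 6, cnt i := by
    rw [hQdef]
    rw [Finset.card_eq_sum_card_fiberwise
      (f := Prod.fst) (t := Finset.univ) (fun x _ => Finset.mem_univ _)]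
    apply Finset.sum_congr rfl
    intro i _
    rw [hcntdef]
    apply Finset.card_bij (fun x _ => x.2)
    · intro x hx
      rw [Finset.mem_filter, Finset.mem_filter] at hx
      obtain ⟨⟨_, hx1, hx2⟩, hfst⟩ := hx
      rw [Finset.mem_filter]
      subst hfst
      exact ⟨Finset.mem_univ _, hx1, hx2⟩
    · intro x hx y hy hxy
      rw [Finset.mem_filter, Finset.mem_filter] at hx hy
      obtain ⟨_, hfx⟩ := hx
      obtain ⟨_, hfy⟩ := hy
      exact Prod.ext (hfx.trans hfy.symm) hxy
    · intro j hj
      rw [Finset.mem_filter] at hj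
      refine ⟨(i, j), ?_, rfl⟩
      rw [Finset.mem_filter, Finset.mem_filter]
      exact ⟨⟨Finset.mem_univ _, hj.2.1, hj.2.2⟩, rfl⟩
  -- a line with ≥ 4 marked points on the cubic is contained in the cubic
  have hfull4 : ∀ i : Fin 6, 4 ≤ cnt i →
      ∀ v : Fin 3 → ℂ, eval v (ℓ i) = 0 → eval v F = 0 := by
    intro i hcnt v hv
    rw [hcntdef] at hcnt
    obtain ⟨t, hts, htc⟩ := Finset.exists_subset_card_eq hcnt
    set σ := t.orderIsoOfFin htc with hσ
    have hprops : ∀ k : Fin 4, i ≠ (σ k : Fin 6) ∧ eval (P i (σ k)).rep F = 0 := by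
      intro k
      have := hts (σ k).2
      rw [Finset.mem_filter] at this
      exact this.2
    have hfi0 : evalL (ℓ i) ≠ 0 := by
      intro h0
      exact hne i (evalL_zero_of (hh i) h0)
    apply plane_vanish hFh hfi0 (fun k => (P i (σ k)).rep)
      (fun k => by rw [hfe]; exact hP1 i (σ k) (hprops k).1)
      (fun k => (hprops k).2)
      ?_ v (by rw [hfe]; exact hv)
    intro k l hkl c he
    have hne2 : P i (σ k) ≠ P i (σ l) := by
      intro hPe
      have hcc := hinj i (σ k) i (σ l) (hprops k).1 (hprops l).1 hPe
      rcases hcc.2 with h | h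
      · exact (hprops l).1 h.symm
      · exact hkl (σ.injective (Subtype.coe_injective h)).symm
    apply hne2
    have hiff := Projectivization.mk_eq_mk_iff' ℂ (P i (σ k)).rep (P i (σ l)).rep
      (P i (σ k)).rep_nonzero (P i (σ l)).rep_nonzero
    rw [Projectivization.mk_rep, Projectivization.mk_rep] at hiff
    exact hiff.mpr ⟨c, he.symm⟩
  -- at most 3 of the lines are contained in the cubic
  set Full : Fin 6 → Prop :=
    fun i => ∀ v : Fin 3 → ℂ, eval v (ℓ i) = 0 → eval v F = 0 with hFulldef
  have hFullcard : (Finset.univ.filter Full).card ≤ 3 := by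
    by_contra hgt
    push_neg at hgt
    obtain ⟨t, hts, htc⟩ := Finset.exists_subset_card_eq (show 4 ≤ _ from hgt)
    set σ := t.orderIsoOfFin htc with hσ
    have hFullσ : ∀ k : Fin 4, Full (σ k) :=
      fun k => (Finset.mem_filter.mp (hts (σ k).2)).2
    apply hF
    apply cubic_zero_of_four_planes hFh (fun k => ℓ (σ k))
      (fun k => hh _) (fun k => hne _)
      (fun k l hkl c => hdist _ _
        (fun he => hkl (σ.injective (Subtype.coe_injective he))) c)
      (fun k w hw => hFullσ k w hw)
  -- count bounds
  have hcnt5 : ∀ i, cnt i ≤ 5 := by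
    intro i
    rw [hcntdef]
    have hsub5 : Finset.univ.filter (fun j => i ≠ j ∧ eval (P i j).rep F = 0)
        ⊆ Finset.univ.erase i := by
      intro j hj
      rw [Finset.mem_filter] at hj
      exact Finset.mem_erase.mpr ⟨hj.2.1.symm, Finset.mem_univ _⟩
    calc (Finset.univ.filter (fun j => i ≠ j ∧ eval (P i j).rep F = 0)).card
        ≤ (Finset.univ.erase i).card := Finset.card_le_card hsub5
      _ = 5 := by rw [Finset.card_erase_of_mem (Finset.mem_univ _)]; simp
  have hcnt3 : ∀ i, ¬ Full i → cnt i ≤ 3 := by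
    intro i hnf
    by_contra hgt
    push_neg at hgt
    exact hnf (hfull4 i hgt)
  have hsumle : (∑ i : Fin 6, cnt i) ≤ 24 := by
    have hstep : ∀ i : Fin 6, cnt i ≤ 3 + (if Full i then 2 else 0) := by
      intro i
      by_cases hFi : Full i
      · rw [if_pos hFi]; exact hcnt5 i
      · rw [if_neg hFi]; simpa using hcnt3 i hFi
    calc (∑ i : Fin 6, cnt i) ≤ ∑ i : Fin 6, (3 + if Full i then 2 else 0) :=
          Finset.sum_le_sum (fun i _ => hstep i)
      _ = 18 + ∑ i : Fin 6, (if Full i then 2 else 0) := by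
          rw [Finset.sum_add_distrib]
          simp
      _ = 18 + 2 * (Finset.univ.filter Full).card := by
          rw [← Finset.sum_filter, Finset.sum_const, smul_eq_mul, mul_comm]
      _ ≤ 24 := by omega
  rw [hQsum] at hQcard
  omega
end

section
/- Let S = {x₁,…,x₁₂} be twelve distinct points of P² such that no (possibly reducible) cubic curve contains 10 or more points of S. Suppose C is an irreducible homogeneous polynomial of degree 2 whose zero set contains exactly the points x₁,…,x₇ among the points of S. Then every nonzero homogeneous polynomial of degree 2 vanishing at all of the five remaining points x₈,…,x₁₂ is irreducible in ℂ[X,Y,Z]. -/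
open MvPolynomial

private lemma deg_add' {σ : Type*} (a b : σ →₀ ℕ) :
    (a + b).degree = a.degree + b.degree := by
  simp [Finsupp.degree_eq_weight_one, map_add]

/-- extreme (min) coefficient lemma -/
private lemma extreme_min {p q : MvPolynomial (Fin 3) ℂ} {k l : ℕ}
    (hpk : ∀ d ∈ p.support, k ≤ d.degree) (hdp : ∃ d ∈ p.support, d.degree = k)
    (hql : ∀ d ∈ q.support, l ≤ d.degree) (hdq : ∃ d ∈ q.support, d.degree = l) :
    ∃ d : Fin 3 →₀ ℕ, coeff d (p * q) ≠ 0 ∧ d.degree = k + l := by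
  classical
  obtain ⟨dp, hdpm, hdpk⟩ := hdp
  obtain ⟨dq, hdqm, hdql⟩ := hdq
  set P := homogeneousComponent k p with hP
  set Q := homogeneousComponent l q with hQ
  have hP0 : P ≠ 0 := by
    intro h
    have : coeff dp P = coeff dp p := by
      rw [hP, coeff_homogeneousComponent, if_pos hdpk]
    rw [h] at this
    exact (mem_support_iff.mp hdpm) (by simpa using this.symm)
  have hQ0 : Q ≠ 0 := by
    intro h
    have : coeff dq Q = coeff dq q := by
      rw [hQ, coeff_homogeneousComponent, if_pos hdql]
    rw [h] at this
    exact (mem_support_iff.mp hdqm) (by simpa using this.symm)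
  have hPQ0 : P * Q ≠ 0 := mul_ne_zero hP0 hQ0
  have hPQh : (P * Q).IsHomogeneous (k + l) :=
    (homogeneousComponent_isHomogeneous k p).mul (homogeneousComponent_isHomogeneous l q)
  obtain ⟨d, hd⟩ := exists_coeff_ne_zero hPQ0
  have hdeg : d.degree = k + l := by
    have := hPQh hd
    rwa [Finsupp.degree_eq_weight_one]
  refine ⟨d, ?_, hdeg⟩
  have key : coeff d (p * q) = coeff d (P * Q) := by
    rw [coeff_mul, coeff_mul]
    apply Finset.sum_congr rfl
    rintro ⟨u, v⟩ huv
    have huvd : u + v = d := Finset.HasAntidiagonal.mem_antidiagonal.mp huv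
    have hsum : u.degree + v.degree = k + l := by
      rw [← deg_add', huvd, hdeg]
    simp only [hP, hQ, coeff_homogeneousComponent]
    by_cases hu : u.degree = k
    · have hv : v.degree = l := by omega
      rw [if_pos hu, if_pos hv]
    · rcases lt_or_gt_of_ne hu with h1 | h1
      · have : coeff u p = 0 := by
          by_contra hne
          exact absurd (hpk u (mem_support_iff.mpr hne)) (by omega)
        rw [this, if_neg hu, zero_mul, zero_mul]
      · have hv : v.degree < l := by omega
        have : coeff v q = 0 := by
          by_contra hne
          exact absurd (hql v (mem_support_iff.mpr hne)) (by omega)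
        rw [this, if_neg (by omega : ¬ v.degree = l), mul_zero, mul_zero]
  rw [key]; exact hd

private lemma extreme_max {p q : MvPolynomial (Fin 3) ℂ} {k l : ℕ}
    (hpk : ∀ d ∈ p.support, d.degree ≤ k) (hdp : ∃ d ∈ p.support, d.degree = k)
    (hql : ∀ d ∈ q.support, d.degree ≤ l) (hdq : ∃ d ∈ q.support, d.degree = l) :
    ∃ d : Fin 3 →₀ ℕ, coeff d (p * q) ≠ 0 ∧ d.degree = k + l := by
  classical
  obtain ⟨dp, hdpm, hdpk⟩ := hdp
  obtain ⟨dq, hdqm, hdql⟩ := hdq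
  set P := homogeneousComponent k p with hP
  set Q := homogeneousComponent l q with hQ
  have hP0 : P ≠ 0 := by
    intro h
    have : coeff dp P = coeff dp p := by
      rw [hP, coeff_homogeneousComponent, if_pos hdpk]
    rw [h] at this
    exact (mem_support_iff.mp hdpm) (by simpa using this.symm)
  have hQ0 : Q ≠ 0 := by
    intro h
    have : coeff dq Q = coeff dq q := by
      rw [hQ, coeff_homogeneousComponent, if_pos hdql]
    rw [h] at this
    exact (mem_support_iff.mp hdqm) (by simpa using this.symm)
  have hPQ0 : P * Q ≠ 0 := mul_ne_zero hP0 hQ0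
  have hPQh : (P * Q).IsHomogeneous (k + l) :=
    (homogeneousComponent_isHomogeneous k p).mul (homogeneousComponent_isHomogeneous l q)
  obtain ⟨d, hd⟩ := exists_coeff_ne_zero hPQ0
  have hdeg : d.degree = k + l := by
    have := hPQh hd
    rwa [Finsupp.degree_eq_weight_one]
  refine ⟨d, ?_, hdeg⟩
  have key : coeff d (p * q) = coeff d (P * Q) := by
    rw [coeff_mul, coeff_mul]
    apply Finset.sum_congr rfl
    rintro ⟨u, v⟩ huv
    have huvd : u + v = d := Finset.HasAntidiagonal.mem_antidiagonal.mp huv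
    have hsum : u.degree + v.degree = k + l := by
      rw [← deg_add', huvd, hdeg]
    simp only [hP, hQ, coeff_homogeneousComponent]
    by_cases hu : u.degree = k
    · have hv : v.degree = l := by omega
      rw [if_pos hu, if_pos hv]
    · rcases lt_or_gt_of_ne hu with h1 | h1
      · have hv : l < v.degree := by omega
        have : coeff v q = 0 := by
          by_contra hne
          exact absurd (hql v (mem_support_iff.mpr hne)) (by omega)
        rw [this, if_neg (by omega : ¬ v.degree = l), mul_zero, mul_zero]
      · have : coeff u p = 0 := by
          by_contra hne
          exact absurd (hpk u (mem_support_iff.mpr hne)) (by omega)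
        rw [this, if_neg hu, zero_mul, zero_mul]
  rw [key]; exact hd

private lemma factor_homogeneous {p q : MvPolynomial (Fin 3) ℂ} (hp : p ≠ 0) (hq : q ≠ 0)
    {n : ℕ} (h : (p * q).IsHomogeneous n) :
    ∃ k l : ℕ, k + l = n ∧ p.IsHomogeneous k ∧ q.IsHomogeneous l := by
  classical
  have hps : (p.support.image Finsupp.degree).Nonempty :=
    (Finset.image_nonempty).mpr (Finset.nonempty_iff_ne_empty.mpr (mt support_eq_empty.mp hp))
  have hqs : (q.support.image Finsupp.degree).Nonempty :=
    (Finset.image_nonempty).mpr (Finset.nonempty_iff_ne_empty.mpr (mt support_eq_empty.mp hq))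
  set k := (p.support.image Finsupp.degree).min' hps with hk
  set k' := (p.support.image Finsupp.degree).max' hps with hk'
  set l := (q.support.image Finsupp.degree).min' hqs with hl
  set l' := (q.support.image Finsupp.degree).max' hqs with hl'
  have hkmem : ∃ d ∈ p.support, d.degree = k := by
    have := Finset.min'_mem _ hps
    simpa [eq_comm] using Finset.mem_image.mp this
  have hk'mem : ∃ d ∈ p.support, d.degree = k' := by
    have := Finset.max'_mem _ hps
    simpa [eq_comm] using Finset.mem_image.mp this
  have hlmem : ∃ d ∈ q.support, d.degree = l := by
    have := Finset.min'_mem _ hqs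
    simpa [eq_comm] using Finset.mem_image.mp this
  have hl'mem : ∃ d ∈ q.support, d.degree = l' := by
    have := Finset.max'_mem _ hqs
    simpa [eq_comm] using Finset.mem_image.mp this
  have hkle : ∀ d ∈ p.support, k ≤ d.degree := fun d hd =>
    Finset.min'_le _ _ (Finset.mem_image_of_mem _ hd)
  have hk'ge : ∀ d ∈ p.support, d.degree ≤ k' := fun d hd =>
    Finset.le_max' _ _ (Finset.mem_image_of_mem _ hd)
  have hlle : ∀ d ∈ q.support, l ≤ d.degree := fun d hd =>
    Finset.min'_le _ _ (Finset.mem_image_of_mem _ hd)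
  have hl'ge : ∀ d ∈ q.support, d.degree ≤ l' := fun d hd =>
    Finset.le_max' _ _ (Finset.mem_image_of_mem _ hd)
  obtain ⟨d1, hd1, hd1deg⟩ := extreme_min hkle hkmem hlle hlmem
  obtain ⟨d2, hd2, hd2deg⟩ := extreme_max hk'ge hk'mem hl'ge hl'mem
  have h1 : k + l = n := by
    have := h hd1
    rw [Pi.one_def, ← Finsupp.degree_eq_weight_one] at this
    omega
  have h2 : k' + l' = n := by
    have := h hd2
    rw [Pi.one_def, ← Finsupp.degree_eq_weight_one] at this
    omega
  have hkk' : k ≤ k' := by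
    obtain ⟨d, hd, hdeq⟩ := hk'mem
    have := hkle d hd; omega
  have hll' : l ≤ l' := by
    obtain ⟨d, hd, hdeq⟩ := hl'mem
    have := hlle d hd; omega
  have hke : k = k' := by omega
  have hle : l = l' := by omega
  refine ⟨k, l, h1, ?_, ?_⟩
  · intro d hd
    rw [Pi.one_def, ← Finsupp.degree_eq_weight_one]
    have h1 := hkle d (mem_support_iff.mpr hd)
    have h2 := hk'ge d (mem_support_iff.mpr hd)
    omega
  · intro d hd
    rw [Pi.one_def, ← Finsupp.degree_eq_weight_one]
    have h1 := hlle d (mem_support_iff.mpr hd)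
    have h2 := hl'ge d (mem_support_iff.mpr hd)
    omega

theorem conic_through_remaining_five_points_is_irreducible
    (x : Fin 12 → Projectivization ℂ (Fin 3 → ℂ)) (hx : Function.Injective x)
    (hcubic : ∀ F : MvPolynomial (Fin 3) ℂ, F ≠ 0 → F.IsHomogeneous 3 →
      {y ∈ Set.range x | eval y.rep F = 0}.ncard ≤ 9)
    (C : MvPolynomial (Fin 3) ℂ) (hCh : C.IsHomogeneous 2) (hCirr : Irreducible C)
    (hCv : ∀ i : Fin 12, eval (x i).rep C = 0 ↔ (i : ℕ) < 7)
    (D : MvPolynomial (Fin 3) ℂ) (hD : D ≠ 0) (hDh : D.IsHomogeneous 2)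
    (hDv : ∀ i : Fin 12, 7 ≤ (i : ℕ) → eval (x i).rep D = 0) :
    Irreducible D := by
  classical
  by_contra hni
  rw [irreducible_iff] at hni
  push_neg at hni
  have hDnu : ¬ IsUnit D := by
    intro h
    have h8 : eval (x 8).rep D = 0 := hDv 8 (by decide)
    have := h.map (eval (x 8).rep)
    rw [h8] at this
    exact not_isUnit_zero this
  obtain ⟨a, b, hab, hua, hub⟩ := hni hDnu
  have ha0 : a ≠ 0 := by rintro rfl; rw [zero_mul] at hab; exact hD hab
  have hb0 : b ≠ 0 := by rintro rfl; rw [mul_zero] at hab; exact hD hab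
  have habh : (a * b).IsHomogeneous 2 := hab ▸ hDh
  obtain ⟨k, l, hkl, hah, hbh⟩ := factor_homogeneous ha0 hb0 habh
  -- degree-0 homogeneous nonzero polynomials are units
  have hunit : ∀ p : MvPolynomial (Fin 3) ℂ, p ≠ 0 → p.IsHomogeneous 0 → IsUnit p := by
    intro p hp0 hph
    have hpC : p = MvPolynomial.C (coeff 0 p) := by
      ext d
      rw [coeff_C]
      split_ifs with hd
      · rw [hd]
      · by_contra hne
        have := hph hne
        rw [Pi.one_def, ← Finsupp.degree_eq_weight_one] at this
        exact (Ne.symm hd) ((Finsupp.degree_eq_zero_iff d).mp this)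
    have hc0 : coeff 0 p ≠ 0 := by
      intro h; apply hp0; rw [hpC, h, map_zero]
    rw [hpC]
    exact IsUnit.of_mul_eq_one (MvPolynomial.C (coeff 0 p)⁻¹)
      (by rw [← map_mul, mul_inv_cancel₀ hc0, map_one])
  have hk1 : k = 1 ∧ l = 1 := by
    constructor
    · by_contra h
      rcases Nat.eq_zero_or_pos k with h0 | hpos
      · exact hua (hunit a ha0 (h0 ▸ hah))
      · have hl0 : l = 0 := by omega
        exact hub (hunit b hb0 (hl0 ▸ hbh))
    · by_contra h
      rcases Nat.eq_zero_or_pos l with h0 | hpos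
      · exact hub (hunit b hb0 (h0 ▸ hbh))
      · have hk0 : k = 0 := by omega
        exact hua (hunit a ha0 (hk0 ▸ hah))
  obtain ⟨hk, hl⟩ := hk1
  subst hk; subst hl
  have hCz : C ≠ 0 := hCirr.ne_zero
  -- helper: no degree-1 form can vanish at 3 of the last five points
  have key : ∀ L : MvPolynomial (Fin 3) ℂ, L ≠ 0 → L.IsHomogeneous 1 →
      3 ≤ (Finset.univ.filter
        (fun i : Fin 12 => 7 ≤ (i : ℕ) ∧ eval (x i).rep L = 0)).card → False := by
    intro L hL0 hL1 h3
    set F := C * L with hF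
    have hF0 : F ≠ 0 := mul_ne_zero hCz hL0
    have hFh : F.IsHomogeneous 3 := by
      have := hCh.mul hL1
      norm_num at this
      exact this
    have h9 := hcubic F hF0 hFh
    set A := Finset.univ.filter
      (fun i : Fin 12 => 7 ≤ (i : ℕ) ∧ eval (x i).rep L = 0) with hA
    set T := Finset.univ.filter (fun i : Fin 12 => (i : ℕ) < 7) ∪ A with hT
    have hsub : (x '' ↑T) ⊆ {y ∈ Set.range x | eval y.rep F = 0} := by
      rintro y ⟨i, hi, rfl⟩
      refine ⟨⟨i, rfl⟩, ?_⟩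
      rw [hF, map_mul]
      simp only [hT, hA, Finset.coe_union, Set.mem_union, Finset.coe_filter,
        Set.mem_setOf_eq, Finset.mem_univ, true_and] at hi
      rcases hi with h7 | ⟨_, hLz⟩
      · rw [(hCv i).mpr h7, zero_mul]
      · rw [hLz, mul_zero]
    have hfin : {y ∈ Set.range x | eval y.rep F = 0}.Finite :=
      Set.Finite.subset (Set.finite_range x) (fun y hy => hy.1)
    have hcard : (x '' ↑T).ncard = T.card := by
      rw [Set.ncard_image_of_injective _ hx, Set.ncard_coe_finset]
    have hle9 : T.card ≤ 9 := by
      rw [← hcard]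
      exact le_trans (Set.ncard_le_ncard hsub hfin) h9
    have hdisj : Disjoint (Finset.univ.filter (fun i : Fin 12 => (i : ℕ) < 7)) A := by
      rw [Finset.disjoint_left]
      intro i hi hiA
      rw [hA] at hiA
      simp only [Finset.mem_filter, Finset.mem_univ, true_and] at hi hiA
      have h1 : (i : ℕ) < 7 := hi
      have h2 : 7 ≤ (i : ℕ) := hiA.1
      omega
    have hTcard : T.card = (Finset.univ.filter (fun i : Fin 12 => (i : ℕ) < 7)).card + A.card :=
      Finset.card_union_of_disjoint hdisj
    have h7card : (Finset.univ.filter (fun i : Fin 12 => (i : ℕ) < 7)).card = 7 := by decide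
    omega
  -- pigeonhole among the last five points
  set Aa := Finset.univ.filter
    (fun i : Fin 12 => 7 ≤ (i : ℕ) ∧ eval (x i).rep a = 0) with hAa
  set Ab := Finset.univ.filter
    (fun i : Fin 12 => 7 ≤ (i : ℕ) ∧ eval (x i).rep b = 0) with hAb
  have hsub5 : Finset.univ.filter (fun i : Fin 12 => 7 ≤ (i : ℕ)) ⊆ Aa ∪ Ab := by
    intro i hi
    simp only [Finset.mem_filter, Finset.mem_univ, true_and] at hi
    have : eval (x i).rep D = 0 := hDv i hi
    rw [hab, map_mul] at this
    rcases mul_eq_zero.mp this with h | h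
    · exact Finset.mem_union_left _ (by simp [hAa, hi, h])
    · exact Finset.mem_union_right _ (by simp [hAb, hi, h])
  have h5 : (Finset.univ.filter (fun i : Fin 12 => 7 ≤ (i : ℕ))).card = 5 := by decide
  have hcards : 5 ≤ Aa.card + Ab.card := by
    calc 5 = (Finset.univ.filter (fun i : Fin 12 => 7 ≤ (i : ℕ))).card := h5.symm
    _ ≤ (Aa ∪ Ab).card := Finset.card_le_card hsub5
    _ ≤ Aa.card + Ab.card := Finset.card_union_le _ _
  rcases (by omega : 3 ≤ Aa.card ∨ 3 ≤ Ab.card) with h | h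
  · exact key a ha0 hah h
  · exact key b hb0 hbh h
end

section
/- Let S′ be a set of 9 distinct points of P² such that no line contains 4 or more points of S′ and no conic (irreducible or reducible) contains 7 or more points of S′. If F and G are nonzero homogeneous polynomials of degree 3 in ℂ[X,Y,Z], both vanishing at every point of S′, and F and G have a common nonconstant factor in ℂ[X,Y,Z], then F and G are linearly dependent over ℂ (i.e., they define the same cubic curve). -/
open MvPolynomial

noncomputable def psiH : MvPolynomial (Fin 3) ℂ →ₐ[ℂ] Polynomial (MvPolynomial (Fin 3) ℂ) :=
  aeval (fun i => Polynomial.C (X i) * Polynomial.X)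

lemma psiH_monomial (d : Fin 3 →₀ ℕ) (c : ℂ) :
    psiH (monomial d c) = Polynomial.C (monomial d c) * Polynomial.X ^ d.degree := by
  rw [psiH, aeval_monomial]
  have hprod : (d.prod fun i k => (Polynomial.C (X i : MvPolynomial (Fin 3) ℂ) * Polynomial.X) ^ k)
      = Polynomial.C (d.prod fun i k => (X i : MvPolynomial (Fin 3) ℂ) ^ k)
        * Polynomial.X ^ d.degree := by
    rw [Finsupp.prod, Finsupp.prod, Finsupp.degree]
    simp_rw [mul_pow, ← Polynomial.C_pow]
    rw [Finset.prod_mul_distrib, ← map_prod, Finset.prod_pow_eq_pow_sum]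
    rfl
  rw [hprod, monomial_eq]
  have : (algebraMap ℂ (Polynomial (MvPolynomial (Fin 3) ℂ))) c = Polynomial.C (C c) := rfl
  rw [this, map_mul]
  ring

lemma coeff_psiH (r : MvPolynomial (Fin 3) ℂ) (m : ℕ) :
    (psiH r).coeff m = homogeneousComponent m r := by
  induction r using MvPolynomial.induction_on' with
  | monomial d c =>
      rw [psiH_monomial, Polynomial.coeff_C_mul, Polynomial.coeff_X_pow,
        homogeneousComponent_of_mem ((mem_homogeneousSubmodule _ _).2
          (isHomogeneous_monomial c rfl))]
      by_cases h : m = d.degree <;> simp [h]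
  | add p q hp hq => simp [map_add, hp, hq]

lemma psiH_ne_zero {r : MvPolynomial (Fin 3) ℂ} (hr : r ≠ 0) : psiH r ≠ 0 := by
  intro h0
  apply hr
  rw [← sum_homogeneousComponent r]
  apply Finset.sum_eq_zero
  intro m _
  rw [← coeff_psiH, h0, Polynomial.coeff_zero]

lemma psiH_of_isHomogeneous {r : MvPolynomial (Fin 3) ℂ} {n : ℕ} (hr : r.IsHomogeneous n) :
    psiH r = Polynomial.C r * Polynomial.X ^ n := by
  ext m
  rw [coeff_psiH, Polynomial.coeff_C_mul, Polynomial.coeff_X_pow,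
    homogeneousComponent_of_mem ((mem_homogeneousSubmodule _ _).2 hr)]
  by_cases h : m = n <;> simp [h]

lemma isHomogeneous_of_mul {p q : MvPolynomial (Fin 3) ℂ} {n : ℕ}
    (hpq : (p * q).IsHomogeneous n) (hp : p ≠ 0) (hq : q ≠ 0) :
    p.IsHomogeneous p.totalDegree := by
  have hψp := psiH_ne_zero hp
  have hψq := psiH_ne_zero hq
  have hmul : psiH p * psiH q = Polynomial.C (p * q) * Polynomial.X ^ n := by
    rw [← map_mul]; exact psiH_of_isHomogeneous hpq
  have hpq0 : p * q ≠ 0 := mul_ne_zero hp hq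
  have hdeg : (psiH p).natDegree + (psiH q).natDegree = n := by
    rw [← Polynomial.natDegree_mul hψp hψq, hmul, Polynomial.C_mul_X_pow_eq_monomial,
      Polynomial.natDegree_monomial, if_neg hpq0]
  have htr : (psiH p).natTrailingDegree + (psiH q).natTrailingDegree = n := by
    rw [← Polynomial.natTrailingDegree_mul hψp hψq, hmul, Polynomial.C_mul_X_pow_eq_monomial,
      Polynomial.natTrailingDegree_monomial hpq0]
  have h1 : (psiH p).natTrailingDegree ≤ (psiH p).natDegree :=
    Polynomial.natTrailingDegree_le_natDegree _
  have h2 : (psiH q).natTrailingDegree ≤ (psiH q).natDegree :=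
    Polynomial.natTrailingDegree_le_natDegree _
  have hkey : (psiH p).natTrailingDegree = (psiH p).natDegree := by omega
  set D := (psiH p).natDegree with hD
  have hcomp : ∀ m, m ≠ D → homogeneousComponent m p = 0 := by
    intro m hm
    rw [← coeff_psiH]
    rcases lt_or_gt_of_ne hm with hlt | hgt
    · exact Polynomial.coeff_eq_zero_of_lt_natTrailingDegree (by omega)
    · exact Polynomial.coeff_eq_zero_of_natDegree_lt hgt
  have hpd : p = homogeneousComponent D p := by
    conv_lhs => rw [← sum_homogeneousComponent p]
    apply Finset.sum_eq_single
    · intro m _ hm; exact hcomp m hm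
    · intro hnot
      simp only [Finset.mem_range, not_lt] at hnot
      exact homogeneousComponent_eq_zero _ _ (by omega)
  have hhom : p.IsHomogeneous D := hpd ▸ homogeneousComponent_isHomogeneous D p
  rwa [hhom.totalDegree hp]

theorem cubics_with_common_factor_through_nine_points_are_proportional
    (S : Finset (Projectivization ℂ (Fin 3 → ℂ))) (hS : S.card = 9)
    (hline : ∀ l : MvPolynomial (Fin 3) ℂ, l ≠ 0 → l.IsHomogeneous 1 →
      {x ∈ (S : Set (Projectivization ℂ (Fin 3 → ℂ))) | eval x.rep l = 0}.ncard ≤ 3)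
    (hconic : ∀ c : MvPolynomial (Fin 3) ℂ, c ≠ 0 → c.IsHomogeneous 2 →
      {x ∈ (S : Set (Projectivization ℂ (Fin 3 → ℂ))) | eval x.rep c = 0}.ncard ≤ 6)
    (F G : MvPolynomial (Fin 3) ℂ) (hF : F ≠ 0) (hG : G ≠ 0)
    (hFh : F.IsHomogeneous 3) (hGh : G.IsHomogeneous 3)
    (hFv : ∀ x ∈ S, eval (Projectivization.rep x) F = 0)
    (hGv : ∀ x ∈ S, eval (Projectivization.rep x) G = 0)
    (h : MvPolynomial (Fin 3) ℂ) (hdeg : 0 < h.totalDegree)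
    (hhF : h ∣ F) (hhG : h ∣ G) :
    ∃ c : ℂ, c ≠ 0 ∧ G = c • F := by
  classical
  -- translate the ncard hypotheses into Finset.card bounds
  have hset : ∀ p : MvPolynomial (Fin 3) ℂ,
      {x ∈ (S : Set (Projectivization ℂ (Fin 3 → ℂ))) | eval x.rep p = 0}
        = ↑(S.filter fun x => eval x.rep p = 0) := by
    intro p; ext x; simp
  have bound : ∀ (p : MvPolynomial (Fin 3) ℂ) (k : ℕ), p ≠ 0 → p.IsHomogeneous k → k ≤ 3 →
      (S.filter fun x => eval x.rep p = 0).card ≤ 3 * k := by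
    intro p k hp hpk hk3
    interval_cases k
    · have hpC : p = C (coeff 0 p) := by
        ext d
        rw [coeff_C]
        by_cases hd : (0 : Fin 3 →₀ ℕ) = d
        · rw [if_pos hd, ← hd]
        · rw [if_neg hd]
          exact hpk.coeff_eq_zero (by
            rw [Ne, Finsupp.degree_eq_zero_iff]; exact fun h' => hd h'.symm)
      have hc0 : coeff 0 p ≠ 0 := fun h0 => hp (by rw [hpC, h0, map_zero])
      have : (S.filter fun x => eval x.rep p = 0) = ∅ := by
        apply Finset.filter_false_of_mem
        intro x _
        rw [hpC, eval_C]
        exact hc0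
      simp [this]
    · have := hline p hp hpk
      rw [hset p, Set.ncard_coe_finset] at this; omega
    · have := hconic p hp hpk
      rw [hset p, Set.ncard_coe_finset] at this; omega
    · calc (S.filter fun x => eval x.rep p = 0).card ≤ S.card := Finset.card_filter_le _ _
        _ = 9 := hS
        _ ≤ 3 * 3 := by norm_num
  obtain ⟨a, hFa⟩ := hhF
  obtain ⟨b, hGb⟩ := hhG
  have hh0 : h ≠ 0 := fun h0 => hF (by rw [hFa, h0, zero_mul])
  have ha0 : a ≠ 0 := fun h0 => hF (by rw [hFa, h0, mul_zero])
  have hb0 : b ≠ 0 := fun h0 => hG (by rw [hGb, h0, mul_zero])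
  have hhhom : h.IsHomogeneous h.totalDegree := isHomogeneous_of_mul (hFa ▸ hFh) hh0 ha0
  have hahom : a.IsHomogeneous a.totalDegree :=
    isHomogeneous_of_mul (n := 3) (by rw [mul_comm, ← hFa]; exact hFh) ha0 hh0
  have hbhom : b.IsHomogeneous b.totalDegree :=
    isHomogeneous_of_mul (n := 3) (by rw [mul_comm, ← hGb]; exact hGh) hb0 hh0
  set d := h.totalDegree with hdd
  set e := a.totalDegree with hee
  have hde : d + e = 3 := (hFa ▸ hhhom.mul hahom).inj_right hFh hF
  have hbe : b.totalDegree = e := by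
    have : d + b.totalDegree = 3 := (hGb ▸ hhhom.mul hbhom).inj_right hGh hG
    omega
  rw [hbe] at hbhom
  have hd1 : 1 ≤ d := hdeg
  have hd3 : d ≤ 3 := by omega
  have he3 : e ≤ 3 := by omega
  set T := S.filter (fun x => ¬ eval x.rep h = 0) with hT
  have haT : ∀ x ∈ T, eval x.rep a = 0 := by
    intro x hx
    rw [Finset.mem_filter] at hx
    have := hFv x hx.1
    rw [hFa, map_mul] at this
    exact (mul_eq_zero.mp this).resolve_left hx.2
  have hbT : ∀ x ∈ T, eval x.rep b = 0 := by
    intro x hx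
    rw [Finset.mem_filter] at hx
    have := hGv x hx.1
    rw [hGb, map_mul] at this
    exact (mul_eq_zero.mp this).resolve_left hx.2
  have hTsub : ∀ (p : MvPolynomial (Fin 3) ℂ), (∀ x ∈ T, eval x.rep p = 0) →
      T ⊆ S.filter (fun x => eval x.rep p = 0) := by
    intro p hp x hx
    rw [Finset.mem_filter]
    exact ⟨(Finset.mem_filter.mp hx).1, hp x hx⟩
  have hTcard : T.card ≤ 3 * e :=
    le_trans (Finset.card_le_card (hTsub a haT)) (bound a e ha0 hahom he3)
  have hZhcard : (S.filter (fun x => eval x.rep h = 0)).card ≤ 3 * d :=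
    bound h d hh0 hhhom hd3
  have hsplit : (S.filter (fun x => eval x.rep h = 0)).card + T.card = 9 := by
    rw [hT, Finset.card_filter_add_card_filter_not, hS]
  have hTe : T.card = 3 * e := by omega
  have hZpos : 0 < (S.filter (fun x => eval x.rep h = 0)).card := by omega
  obtain ⟨Q, hQ⟩ := Finset.card_pos.mp hZpos
  rw [Finset.mem_filter] at hQ
  have hQT : Q ∉ T := by
    simp [hT, hQ.2]
  have hinsert : ∀ (p : MvPolynomial (Fin 3) ℂ), p.IsHomogeneous e →
      (∀ x ∈ T, eval x.rep p = 0) → eval Q.rep p = 0 → p = 0 := by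
    intro p hph hpT hpQ
    by_contra hp0
    have hsub : insert Q T ⊆ S.filter (fun x => eval x.rep p = 0) := by
      intro x hx
      rcases Finset.mem_insert.mp hx with rfl | hx
      · exact Finset.mem_filter.mpr ⟨hQ.1, hpQ⟩
      · exact hTsub p hpT hx
    have := Finset.card_le_card hsub
    rw [Finset.card_insert_of_notMem hQT, hTe] at this
    have := bound p e hp0 hph he3
    omega
  have haQ : eval Q.rep a ≠ 0 := fun h0 => ha0 (hinsert a hahom haT h0)
  have hbQ : eval Q.rep b ≠ 0 := fun h0 => hb0 (hinsert b hbhom hbT h0)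
  have hchom : ((eval Q.rep b) • a - (eval Q.rep a) • b).IsHomogeneous e := by
    apply MvPolynomial.IsHomogeneous.sub
    · rw [smul_eq_C_mul]; exact hahom.C_mul _
    · rw [smul_eq_C_mul]; exact hbhom.C_mul _
  have hcT : ∀ x ∈ T, eval x.rep ((eval Q.rep b) • a - (eval Q.rep a) • b) = 0 := by
    intro x hx
    rw [map_sub, smul_eq_C_mul, smul_eq_C_mul, map_mul, map_mul, eval_C, eval_C,
      haT x hx, hbT x hx]
    ring
  have hcQ : eval Q.rep ((eval Q.rep b) • a - (eval Q.rep a) • b) = 0 := by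
    rw [map_sub, smul_eq_C_mul, smul_eq_C_mul, map_mul, map_mul, eval_C, eval_C]
    ring
  have hc0 : (eval Q.rep b) • a - (eval Q.rep a) • b = 0 := hinsert _ hchom hcT hcQ
  have hba : (eval Q.rep b) • a = (eval Q.rep a) • b := sub_eq_zero.mp hc0
  refine ⟨eval Q.rep b / eval Q.rep a, div_ne_zero hbQ haQ, ?_⟩
  have hkey : (eval Q.rep a) • G = (eval Q.rep b) • F := by
    rw [hGb, hFa, ← mul_smul_comm, ← mul_smul_comm, hba]
  calc G = ((eval Q.rep a)⁻¹ * eval Q.rep a) • G := by rw [inv_mul_cancel₀ haQ, one_smul]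
    _ = (eval Q.rep a)⁻¹ • ((eval Q.rep a) • G) := by rw [mul_smul]
    _ = (eval Q.rep a)⁻¹ • ((eval Q.rep b) • F) := by rw [hkey]
    _ = (eval Q.rep b / eval Q.rep a) • F := by rw [smul_smul, div_eq_inv_mul]
end

section
/- Let S be a set of 12 distinct points of P² such that: no line contains 5 or more points of S; no conic (irreducible or reducible) contains 8 or more points of S; and no (possibly reducible) cubic curve contains 10 or more points of S. Then there are at most 5 distinct lines in P² each of which contains at least 4 points of S. -/
open MvPolynomial

private lemma degree_one_single (d : Fin 3 →₀ ℕ) (hd : d.degree = 1) :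
    ∃ i, d = Finsupp.single i 1 := by
  have hsum : ∑ i : Fin 3, d i = 1 := by
    rw [← hd, Finsupp.degree]
    exact (Finset.sum_subset (Finset.subset_univ _)
      (fun x _ hx => Finsupp.notMem_support_iff.mp hx)).symm
  rw [Fin.sum_univ_three] at hsum
  have : (d 0 = 1 ∧ d 1 = 0 ∧ d 2 = 0) ∨ (d 0 = 0 ∧ d 1 = 1 ∧ d 2 = 0)
      ∨ (d 0 = 0 ∧ d 1 = 0 ∧ d 2 = 1) := by omega
  rcases this with ⟨h0, h1, h2⟩ | ⟨h0, h1, h2⟩ | ⟨h0, h1, h2⟩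
  · exact ⟨0, Finsupp.ext fun i => by fin_cases i <;> simp [h0, h1, h2]⟩
  · exact ⟨1, Finsupp.ext fun i => by fin_cases i <;> simp [h0, h1, h2]⟩
  · exact ⟨2, Finsupp.ext fun i => by fin_cases i <;> simp [h0, h1, h2]⟩

private lemma deg1_eq_sum (l : MvPolynomial (Fin 3) ℂ) (hl : l.IsHomogeneous 1) :
    l = ∑ i, MvPolynomial.C (coeff (Finsupp.single i 1) l) * X i := by
  apply MvPolynomial.ext
  intro d
  rw [MvPolynomial.coeff_sum]
  simp only [coeff_C_mul, MvPolynomial.coeff_X']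
  by_cases hd : d.degree = 1
  · obtain ⟨i, rfl⟩ := degree_one_single d hd
    rw [Finset.sum_eq_single i]
    · simp
    · intro j _ hj
      have hne : (Finsupp.single j 1 : Fin 3 →₀ ℕ) ≠ Finsupp.single i 1 := by
        intro h
        rcases (Finsupp.single_eq_single_iff _ _ _ _).mp h with ⟨h1, _⟩ | ⟨h1, _⟩
        · exact hj h1
        · exact one_ne_zero h1
      rw [if_neg hne, mul_zero]
    · simp
  · rw [hl.coeff_eq_zero hd]
    symm
    apply Finset.sum_eq_zero
    intro i _
    rw [if_neg, mul_zero]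
    intro h
    apply hd
    rw [← h]
    simp [Finsupp.degree_single]

private noncomputable def linOf (l : MvPolynomial (Fin 3) ℂ) : (Fin 3 → ℂ) →ₗ[ℂ] ℂ :=
  ∑ i, coeff (Finsupp.single i 1) l • LinearMap.proj i

private lemma ker_eq_span (f : (Fin 3 → ℂ) →ₗ[ℂ] ℂ) (hf : f ≠ 0)
    (v w : Fin 3 → ℂ) (hind : LinearIndependent ℂ ![v, w])
    (hv : f v = 0) (hw : f w = 0) :
    LinearMap.ker f = Submodule.span ℂ (Set.range ![v, w]) := by
  symm
  apply Submodule.eq_of_le_of_finrank_le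
  · rw [Submodule.span_le]
    rintro x ⟨i, rfl⟩
    fin_cases i <;> simpa [LinearMap.mem_ker]
  · have hker : Module.finrank ℂ (LinearMap.ker f) = 2 := by
      have hr : LinearMap.range f = ⊤ :=
        (eq_bot_or_eq_top (LinearMap.range f)).resolve_left (by rwa [LinearMap.range_eq_bot])
      have := LinearMap.finrank_range_add_finrank_ker f
      rw [hr, finrank_top] at this
      simp [Module.finrank_self] at this
      have h3 : Module.finrank ℂ (Fin 3 → ℂ) = 3 := by simp
      omega
    rw [hker, finrank_span_eq_card hind]
    simp

private lemma eval_deg1 (l : MvPolynomial (Fin 3) ℂ) (hl : l.IsHomogeneous 1)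
    (v : Fin 3 → ℂ) : eval v l = linOf l v := by
  conv_lhs => rw [deg1_eq_sum l hl]
  simp [linOf]

private lemma linOf_ne_zero (l : MvPolynomial (Fin 3) ℂ) (hl : l.IsHomogeneous 1)
    (hl0 : l ≠ 0) : linOf l ≠ 0 := by
  intro h
  apply hl0
  rw [deg1_eq_sum l hl]
  apply Finset.sum_eq_zero
  intro i _
  have hi := DFunLike.congr_fun h (Pi.single i 1)
  simp only [linOf, LinearMap.sum_apply, LinearMap.smul_apply, LinearMap.proj_apply,
    LinearMap.zero_apply, smul_eq_mul] at hi
  have : coeff (Finsupp.single i 1) l = 0 := by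
    simpa [Pi.single_apply] using hi
  rw [this]
  simp

private lemma line_inter_subsingleton (l l' : MvPolynomial (Fin 3) ℂ)
    (hl : l.IsHomogeneous 1) (hl' : l'.IsHomogeneous 1) (h0 : l ≠ 0) (h0' : l' ≠ 0)
    (hZZ : {y : Projectivization ℂ (Fin 3 → ℂ) | eval y.rep l = 0} ≠
           {y : Projectivization ℂ (Fin 3 → ℂ) | eval y.rep l' = 0})
    {p q : Projectivization ℂ (Fin 3 → ℂ)}
    (hp : eval p.rep l = 0) (hp' : eval p.rep l' = 0)
    (hq : eval q.rep l = 0) (hq' : eval q.rep l' = 0) : p = q := by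
  by_contra hpq
  apply hZZ
  have hind : LinearIndependent ℂ ![p.rep, q.rep] := by
    rw [LinearIndependent.pair_iff' p.rep_nonzero]
    intro a ha
    exact hpq ((q.mk_rep.symm.trans
      (((Projectivization.mk_eq_mk_iff' ℂ q.rep p.rep q.rep_nonzero p.rep_nonzero).mpr
        ⟨a, ha⟩).trans p.mk_rep)).symm)
  have k1 := ker_eq_span (linOf l) (linOf_ne_zero l hl h0) p.rep q.rep hind
    (by rw [← eval_deg1 l hl]; exact hp) (by rw [← eval_deg1 l hl]; exact hq)
  have k2 := ker_eq_span (linOf l') (linOf_ne_zero l' hl' h0') p.rep q.rep hind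
    (by rw [← eval_deg1 l' hl']; exact hp') (by rw [← eval_deg1 l' hl']; exact hq')
  ext y
  simp only [Set.mem_setOf_eq]
  rw [eval_deg1 l hl, eval_deg1 l' hl', ← LinearMap.mem_ker, ← LinearMap.mem_ker, k1, k2]

local notation "P2" => Projectivization ℂ (Fin 3 → ℂ)

theorem at_most_five_lines_with_four_points
    (S : Finset (Projectivization ℂ (Fin 3 → ℂ))) (hS : S.card = 12)
    (hline : ∀ l : MvPolynomial (Fin 3) ℂ, l ≠ 0 → l.IsHomogeneous 1 →
      {x ∈ (S : Set (Projectivization ℂ (Fin 3 → ℂ))) | eval x.rep l = 0}.ncard ≤ 4)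
    (hconic : ∀ c : MvPolynomial (Fin 3) ℂ, c ≠ 0 → c.IsHomogeneous 2 →
      {x ∈ (S : Set (Projectivization ℂ (Fin 3 → ℂ))) | eval x.rep c = 0}.ncard ≤ 7)
    (hcubic : ∀ F : MvPolynomial (Fin 3) ℂ, F ≠ 0 → F.IsHomogeneous 3 →
      {x ∈ (S : Set (Projectivization ℂ (Fin 3 → ℂ))) | eval x.rep F = 0}.ncard ≤ 9) :
    {Z : Set (Projectivization ℂ (Fin 3 → ℂ)) |
      (∃ l : MvPolynomial (Fin 3) ℂ, l ≠ 0 ∧ l.IsHomogeneous 1 ∧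
        Z = {y : Projectivization ℂ (Fin 3 → ℂ) | eval y.rep l = 0}) ∧
      4 ≤ {y ∈ (S : Set (Projectivization ℂ (Fin 3 → ℂ))) | y ∈ Z}.ncard}.encard ≤ 5 := by
  classical
  by_contra hcon
  push_neg at hcon
  obtain ⟨t, hts, ht6⟩ := Set.exists_subset_encard_eq
    (show (6 : ℕ∞) ≤ _ from by
      have := Order.add_one_le_of_lt hcon
      norm_num at this ⊢
      exact_mod_cast this)
  have htf : t.Finite := Set.finite_of_encard_eq_coe (by exact_mod_cast ht6)
  set F : Finset (Set P2) := htf.toFinset with hF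
  have hFcard : F.card = 6 := by
    have := htf.encard_eq_coe_toFinset_card
    rw [ht6] at this
    exact_mod_cast this.symm
  have hmemF : ∀ Z : Set P2, Z ∈ F ↔ Z ∈ t := fun Z => htf.mem_toFinset
  have hex : ∀ Z ∈ F, ∃ l : MvPolynomial (Fin 3) ℂ, l ≠ 0 ∧ l.IsHomogeneous 1 ∧
      Z = {y : P2 | eval y.rep l = 0} := fun Z hZ => (hts ((hmemF Z).mp hZ)).1
  choose lf hl0 hlh hlz using hex
  have hiff : ∀ (Z : Set P2) (hZ : Z ∈ F) (y : P2),
      y ∈ Z ↔ eval y.rep (lf Z hZ) = 0 :=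
    fun Z hZ y => by simpa using Set.ext_iff.mp (hlz Z hZ) y
  set T : Set P2 → Finset P2 := fun Z => S.filter (· ∈ Z) with hT
  have hmemT : ∀ (Z : Set P2) (hZ : Z ∈ F) (p : P2), p ∈ T Z →
      eval p.rep (lf Z hZ) = 0 := by
    intro Z hZ p hp
    exact (hiff Z hZ p).mp (Finset.mem_filter.mp hp).2
  have hT4 : ∀ (Z : Set P2) (hZ : Z ∈ F), (T Z).card = 4 := by
    intro Z hZ
    have hle : (T Z).card ≤ 4 := by
      have h1 := hline (lf Z hZ) (hl0 Z hZ) (hlh Z hZ)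
      have e : {x : P2 | x ∈ (S : Set P2) ∧ eval x.rep (lf Z hZ) = 0} = ↑(T Z) := by
        ext y; simp [hT, hiff Z hZ]
      rwa [e, Set.ncard_coe_finset] at h1
    have hge : 4 ≤ (T Z).card := by
      have h1 := (hts ((hmemF Z).mp hZ)).2
      have e : {y : P2 | y ∈ S ∧ y ∈ Z} = ↑(T Z) := by
        ext y; simp [hT]
      rwa [e, Set.ncard_coe_finset] at h1
    omega
  have hpair : ∀ (Z : Set P2) (hZ : Z ∈ F) (Z' : Set P2) (hZ' : Z' ∈ F), Z ≠ Z' →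
      ∃ p : P2, p ∈ T Z ∩ T Z' := by
    intro Z hZ Z' hZ' hne
    have hc := hconic (lf Z hZ * lf Z' hZ') (mul_ne_zero (hl0 Z hZ) (hl0 Z' hZ'))
      ((hlh Z hZ).mul (hlh Z' hZ'))
    have hset : {x : P2 | x ∈ (S : Set P2) ∧ eval x.rep (lf Z hZ * lf Z' hZ') = 0}
        = ↑(T Z ∪ T Z') := by
      ext y
      simp only [Set.mem_setOf_eq, Finset.coe_union, Set.mem_union, Finset.mem_coe,
        Finset.mem_filter, hT, map_mul, mul_eq_zero, hiff Z hZ, hiff Z' hZ']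
      tauto
    rw [hset, Set.ncard_coe_finset] at hc
    have hui := Finset.card_union_add_card_inter (T Z) (T Z')
    rw [hT4 Z hZ, hT4 Z' hZ'] at hui
    have : 0 < (T Z ∩ T Z').card := by omega
    exact Finset.card_pos.mp this
  have hsub : ∀ (Z : Set P2) (hZ : Z ∈ F) (Z' : Set P2) (hZ' : Z' ∈ F), Z ≠ Z' →
      ∀ p q : P2, p ∈ T Z → p ∈ T Z' → q ∈ T Z → q ∈ T Z' → p = q := by
    intro Z hZ Z' hZ' hne p q hp hp' hq hq'
    have hZZ : {y : P2 | eval y.rep (lf Z hZ) = 0} ≠ {y : P2 | eval y.rep (lf Z' hZ') = 0} := by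
      rw [← hlz Z hZ, ← hlz Z' hZ']; exact hne
    exact line_inter_subsingleton _ _ (hlh Z hZ) (hlh Z' hZ') (hl0 Z hZ) (hl0 Z' hZ') hZZ
      (hmemT Z hZ p hp) (hmemT Z' hZ' p hp') (hmemT Z hZ q hq) (hmemT Z' hZ' q hq')
  have htriple : ∀ (Z : Set P2) (hZ : Z ∈ F) (Z' : Set P2) (hZ' : Z' ∈ F)
      (Z'' : Set P2) (hZ'' : Z'' ∈ F), Z ≠ Z' → Z ≠ Z'' → Z' ≠ Z'' →
      ∀ p : P2, p ∈ T Z → p ∈ T Z' → p ∈ T Z'' → False := by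
    intro Z hZ Z' hZ' Z'' hZ'' h12 h13 h23 p hp1 hp2 hp3
    have hi12 : T Z ∩ T Z' = {p} := by
      ext q
      simp only [Finset.mem_inter, Finset.mem_singleton]
      constructor
      · rintro ⟨hq1, hq2⟩
        exact hsub Z hZ Z' hZ' h12 q p hq1 hq2 hp1 hp2
      · rintro rfl; exact ⟨hp1, hp2⟩
    have hi3 : (T Z ∪ T Z') ∩ T Z'' = {p} := by
      ext q
      simp only [Finset.mem_inter, Finset.mem_union, Finset.mem_singleton]
      constructor
      · rintro ⟨hq1 | hq1, hq2⟩
        · exact hsub Z hZ Z'' hZ'' h13 q p hq1 hq2 hp1 hp3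
        · exact hsub Z' hZ' Z'' hZ'' h23 q p hq1 hq2 hp2 hp3
      · rintro rfl; exact ⟨Or.inl hp1, hp3⟩
    have hu2 : (T Z ∪ T Z').card = 7 := by
      have := Finset.card_union_add_card_inter (T Z) (T Z')
      rw [hT4 Z hZ, hT4 Z' hZ', hi12, Finset.card_singleton] at this
      omega
    have hu3 : (T Z ∪ T Z' ∪ T Z'').card = 10 := by
      have := Finset.card_union_add_card_inter (T Z ∪ T Z') (T Z'')
      rw [hu2, hT4 Z'' hZ'', hi3, Finset.card_singleton] at this
      omega
    have hc := hcubic (lf Z hZ * lf Z' hZ' * lf Z'' hZ'')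
      (mul_ne_zero (mul_ne_zero (hl0 Z hZ) (hl0 Z' hZ')) (hl0 Z'' hZ''))
      (((hlh Z hZ).mul (hlh Z' hZ')).mul (hlh Z'' hZ''))
    have hset : {x : P2 | x ∈ (S : Set P2) ∧
        eval x.rep (lf Z hZ * lf Z' hZ' * lf Z'' hZ'') = 0} = ↑(T Z ∪ T Z' ∪ T Z'') := by
      ext y
      simp only [Set.mem_setOf_eq, Finset.coe_union, Set.mem_union, Finset.mem_coe,
        Finset.mem_filter, hT, map_mul, mul_eq_zero, hiff Z hZ, hiff Z' hZ', hiff Z'' hZ'']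
      tauto
    rw [hset, Set.ncard_coe_finset, hu3] at hc
    omega
  obtain ⟨Z₀, hZ₀⟩ : F.Nonempty := Finset.card_pos.mp (by omega)
  obtain ⟨q₀, hq₀⟩ : (T Z₀).Nonempty := Finset.card_pos.mp (by rw [hT4 Z₀ hZ₀]; norm_num)
  set f : Set P2 → P2 := fun Z => if h : ∃ p : P2, p ∈ T Z₀ ∩ T Z then h.choose else q₀ with hf
  have hcard := Finset.card_le_card_of_injOn (s := F.erase Z₀) (t := T Z₀) f
    (by
      intro Z hZ
      have hZF : Z ∈ F := Finset.mem_of_mem_erase hZ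
      have hne : Z₀ ≠ Z := (Finset.ne_of_mem_erase hZ).symm
      have h := hpair Z₀ hZ₀ Z hZF hne
      simp only [hf, dif_pos h]
      exact (Finset.mem_inter.mp h.choose_spec).1)
    (by
      intro Z hZm Z' hZ'm hff
      by_contra hne'
      have hZF : Z ∈ F := Finset.mem_of_mem_erase hZm
      have hZ'F : Z' ∈ F := Finset.mem_of_mem_erase hZ'm
      have hne : Z₀ ≠ Z := (Finset.ne_of_mem_erase hZm).symm
      have hne2 : Z₀ ≠ Z' := (Finset.ne_of_mem_erase hZ'm).symm
      have h := hpair Z₀ hZ₀ Z hZF hne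
      have h' := hpair Z₀ hZ₀ Z' hZ'F hne2
      rw [hf] at hff
      simp only [dif_pos h, dif_pos h'] at hff
      have hs1 := Finset.mem_inter.mp h.choose_spec
      have hs2 := Finset.mem_inter.mp h'.choose_spec
      rw [hff] at hs1
      exact htriple Z₀ hZ₀ Z hZF Z' hZ'F hne hne2 hne' h'.choose hs1.1 hs1.2 hs2.2)
  rw [Finset.card_erase_of_mem hZ₀, hFcard, hT4 Z₀ hZ₀] at hcard
  omega
end
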